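/- For every τ ∈ iℝ_{>0}, setting τ̂ = −1/(3τ), one has the identity e^{−πτi/3} θ'(0,3τ)/(4i θ(πτ,3τ) + 6 θ'(πτ,3τ)) = θ'(0,τ̂)/(6 θ'(π/3,τ̂)). -/

import Mathlib

open scoped BigOperators
noncomputable section

abbrev WSt : Type := ℤ × ℕ × ℕ

def cellStep (v w : WSt) : Prop :=
  w = (v.1, v.2.1 + 1, v.2.2 + 1) ∨
  (1 ≤ v.2.2 ∧ w = (v.1, v.2.1, v.2.2 - 1)) ∨
  (1 ≤ v.2.1 ∧ w = (v.1, v.2.1 - 1, v.2.2)) ∨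
  (v.2.1 = 0 ∧ w = (v.1 + 1, v.2.2, 0)) ∨
  (v.2.2 = 0 ∧ w = (v.1 - 1, 0, v.2.1 + 1))

def vertStep (v w : WSt) : Prop :=
  w = (v.1, v.2.1 + 1, v.2.2 + 1) ∨
  (1 ≤ v.2.2 ∧ w = (v.1, v.2.1, v.2.2 - 1)) ∨
  (1 ≤ v.2.1 ∧ w = (v.1, v.2.1 - 1, v.2.2)) ∨
  (v.2.1 = 0 ∧ 1 ≤ v.2.2 ∧ w = (v.1 + 1, v.2.2 - 1, 0)) ∨
  (v.2.2 = 0 ∧ w = (v.1 - 1, 0, v.2.1 + 2))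

def pathCount (step : WSt → WSt → Prop) (n : ℕ) (v : WSt) : ℕ :=
  Nat.card {p : Fin (n + 1) → WSt //
    p 0 = ((0 : ℤ), 0, 0) ∧ p (Fin.last n) = v ∧
    ∀ i : Fin n, step (p i.castSucc) (p i.succ)}

/-- number of cell-centred excursions of length `n` with winding angle `2πk/3` -/
def eCell (n : ℕ) (k : ℤ) : ℕ := pathCount cellStep n (k, 0, 0)

/-- number of vertex-centred walks of length `n` with winding angle `2πk/3` -/
def eVert (n : ℕ) (k : ℤ) : ℕ := pathCount vertStep n (k, 0, 0)

/-- The series `T_k(u,q)`. -/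
def Tk (k : ℕ) (u q : ℂ) : ℂ :=
  ∑' n : ℕ, (-1 : ℂ) ^ n * ((2 * n + 1 : ℕ) : ℂ) ^ k * q ^ (n * (n + 1) / 2) *
    (u ^ (n + 1) - (-1 : ℂ) ^ k * u ^ (-(n : ℤ)))

/-- Jacobi theta function θ₁₁. -/
def jTheta (z τ : ℂ) : ℂ :=
  ∑' n : ℤ, (-1 : ℂ) ^ n *
    Complex.exp (((2 * (n : ℂ) + 1) / 2) ^ 2 * Complex.I * (Real.pi : ℂ) * τ +
      (2 * (n : ℂ) + 1) * Complex.I * z)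

/-- derivative of θ with respect to z -/
def jTheta' (z τ : ℂ) : ℂ := deriv (fun w => jTheta w τ) z

section ThetaAux
open Complex Real

lemma jTheta_eq (z τ : ℂ) :
    jTheta z τ = Complex.exp ((π : ℂ) * I * τ / 4 + I * z) *
      jacobiTheta₂ (z / (π : ℂ) + τ / 2 + 1 / 2) τ := by
  rw [jTheta, jacobiTheta₂, ← tsum_mul_left]
  refine tsum_congr fun n => ?_
  have h1 : ((-1 : ℂ)) ^ n = Complex.exp ((n : ℂ) * ((π : ℂ) * I)) := by
    rw [Complex.exp_int_mul, Complex.exp_pi_mul_I]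
  rw [jacobiTheta₂_term, h1, ← Complex.exp_add, ← Complex.exp_add]
  congr 1
  have hπ : (π : ℂ) ≠ 0 := Complex.ofReal_ne_zero.mpr Real.pi_ne_zero
  field_simp
  ring

lemma jTheta'_eq (z : ℂ) {τ : ℂ} (hτ : 0 < τ.im) :
    jTheta' z τ = Complex.exp ((π : ℂ) * I * τ / 4 + I * z) *
      (I * jacobiTheta₂ (z / (π : ℂ) + τ / 2 + 1 / 2) τ +
        (π : ℂ)⁻¹ * jacobiTheta₂' (z / (π : ℂ) + τ / 2 + 1 / 2) τ) := by
  have hπ : (π : ℂ) ≠ 0 := Complex.ofReal_ne_zero.mpr Real.pi_ne_zero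
  have h1 : HasDerivAt (fun w : ℂ => Complex.exp ((π : ℂ) * I * τ / 4 + I * w))
      (Complex.exp ((π : ℂ) * I * τ / 4 + I * z) * I) z := by
    have h0 : HasDerivAt (fun w : ℂ => (π : ℂ) * I * τ / 4 + I * w) I z := by
      simpa using ((hasDerivAt_id z).const_mul I).const_add ((π : ℂ) * I * τ / 4)
    simpa using h0.cexp
  have h2 : HasDerivAt (fun w : ℂ => jacobiTheta₂ (w / (π : ℂ) + τ / 2 + 1 / 2) τ)
      ((π : ℂ)⁻¹ * jacobiTheta₂' (z / (π : ℂ) + τ / 2 + 1 / 2) τ) z := by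
    have ha : HasDerivAt (fun w : ℂ => w / (π : ℂ) + τ / 2 + 1 / 2) ((π : ℂ)⁻¹) z := by
      simpa [← add_assoc] using ((hasDerivAt_id z).div_const (π : ℂ)).add_const (τ / 2 + 1 / 2)
    have := (hasDerivAt_jacobiTheta₂_fst (z / (π : ℂ) + τ / 2 + 1 / 2) hτ).comp z ha
    rw [mul_comm]; exact this
  have hf : (fun w => jTheta w τ) = fun w => Complex.exp ((π : ℂ) * I * τ / 4 + I * w) *
      jacobiTheta₂ (w / (π : ℂ) + τ / 2 + 1 / 2) τ := funext fun w => jTheta_eq w τ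
  rw [jTheta', hf]
  refine (h1.mul h2).deriv.trans ?_
  ring

lemma theta_zero (τ : ℂ) : jacobiTheta₂ (τ / 2 + 1 / 2) τ = 0 := by
  have h := jacobiTheta₂_add_left' (1 / 2 - τ / 2) τ
  have e1 : (1 / 2 - τ / 2 : ℂ) + τ = τ / 2 + 1 / 2 := by ring
  have e2 : Complex.exp (-(π : ℂ) * I * (τ + 2 * (1 / 2 - τ / 2))) = -1 := by
    rw [show (-(π : ℂ) * I * (τ + 2 * (1 / 2 - τ / 2))) = -((π : ℂ) * I) by ring,
      Complex.exp_neg, Complex.exp_pi_mul_I]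
    norm_num
  have e3 : jacobiTheta₂ (1 / 2 - τ / 2) τ = jacobiTheta₂ (τ / 2 + 1 / 2) τ := by
    have h4 : jacobiTheta₂ (τ / 2 + 1 / 2) τ = jacobiTheta₂ (τ / 2 - 1 / 2) τ := by
      rw [show (τ / 2 + 1 / 2 : ℂ) = (τ / 2 - 1 / 2) + 1 by ring, jacobiTheta₂_add_left]
    rw [h4, show (1 / 2 - τ / 2 : ℂ) = -(τ / 2 - 1 / 2) by ring, jacobiTheta₂_neg_left]
  rw [e1, e2, e3] at h
  linear_combination h / 2

lemma theta_flip (c τ : ℂ) : jacobiTheta₂ (1 / 2 - c) τ = jacobiTheta₂ (c + 1 / 2) τ := by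
  have h4 : jacobiTheta₂ (c + 1 / 2) τ = jacobiTheta₂ (c - 1 / 2) τ := by
    rw [show (c + 1 / 2 : ℂ) = (c - 1 / 2) + 1 by ring, jacobiTheta₂_add_left]
  rw [h4, show (1 / 2 - c : ℂ) = -(c - 1 / 2) by ring, jacobiTheta₂_neg_left]

lemma theta'_flip (c τ : ℂ) : jacobiTheta₂' (1 / 2 - c) τ = -jacobiTheta₂' (c + 1 / 2) τ := by
  have h4 : jacobiTheta₂' (c + 1 / 2) τ = jacobiTheta₂' (c - 1 / 2) τ := by
    rw [show (c + 1 / 2 : ℂ) = (c - 1 / 2) + 1 by ring, jacobiTheta₂'_add_left]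
  rw [h4, show (1 / 2 - c : ℂ) = -(c - 1 / 2) by ring, jacobiTheta₂'_neg_left]

set_option maxHeartbeats 1000000 in
/-- the modular rewriting of `t`: with `τ̂ = −1/(3τ)`,
`e^{−πτi/3} θ'(0,3τ)/(4i θ(πτ,3τ) + 6 θ'(πτ,3τ)) = θ'(0,τ̂)/(6 θ'(π/3,τ̂))`. -/
theorem t_modular_identity (y : ℝ) (hy : 0 < y) (τ : ℂ) (hτ : τ = Complex.I * y) :
    Complex.exp (-(Real.pi : ℂ) * τ * Complex.I / 3) * jTheta' 0 (3 * τ) /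
        (4 * Complex.I * jTheta (Real.pi * τ) (3 * τ) + 6 * jTheta' (Real.pi * τ) (3 * τ)) =
      jTheta' 0 (-1 / (3 * τ)) / (6 * jTheta' ((Real.pi : ℂ) / 3) (-1 / (3 * τ))) := by
  have hπ : (π : ℂ) ≠ 0 := Complex.ofReal_ne_zero.mpr Real.pi_ne_zero
  have hτ0 : τ ≠ 0 := by
    rw [hτ]; simp [Complex.I_ne_zero, Complex.ext_iff, hy.ne']
  have him3 : 0 < (3 * τ).im := by
    rw [hτ]; simpa using by positivity
  have hth_eq : (-1 : ℂ) / (3 * τ) = I * (((1 / (3 * y) : ℝ)) : ℂ) := by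
    rw [hτ]
    have h3y : ((3 * y : ℝ) : ℂ) ≠ 0 := by
      simpa using by positivity
    field_simp
    ring_nf
    simp [Complex.I_sq]
  have him2 : 0 < ((-1 : ℂ) / (3 * τ)).im := by
    rw [hth_eq]; simpa using by positivity
  have hs : ((-I * (-1 / (3 * τ))) ^ (1 / 2 : ℂ)) ≠ 0 := by
    rw [Ne, Complex.cpow_eq_zero_iff]
    intro h
    have : (-I * (-1 / (3 * τ))) ≠ 0 := by
      apply mul_ne_zero (by simpa using Complex.I_ne_zero)
      simp [hτ0]
    exact this h.1
  set k : ℂ := Complex.exp ((π : ℂ) * I / 2 - (π : ℂ) * I * τ / 3) *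
      ((-I * (-1 / (3 * τ))) ^ (1 / 2 : ℂ)) / (3 * τ) with hk_def
  have hk : k ≠ 0 := by
    apply div_ne_zero (mul_ne_zero (Complex.exp_ne_zero _) hs)
    simpa using hτ0
  have hnum : Complex.exp (-(π : ℂ) * τ * I / 3) * jTheta' 0 (3 * τ) =
      k * jTheta' 0 (-1 / (3 * τ)) := by
    rw [jTheta'_eq 0 him3, jTheta'_eq 0 him2]
    rw [show ((0 : ℂ) / (π : ℂ) + 3 * τ / 2 + 1 / 2) = 3 * τ / 2 + 1 / 2 by ring]
    rw [show ((0 : ℂ) / (π : ℂ) + (-1 / (3 * τ)) / 2 + 1 / 2) = (-1 / (3 * τ)) / 2 + 1 / 2 by ring]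
    rw [theta_zero (3 * τ)]
    rw [jacobiTheta₂_functional_equation ((-1 / (3 * τ)) / 2 + 1 / 2) (-1 / (3 * τ)),
        jacobiTheta₂'_functional_equation ((-1 / (3 * τ)) / 2 + 1 / 2) (-1 / (3 * τ))]
    rw [show (-1 : ℂ) / (-1 / (3 * τ)) = 3 * τ by field_simp]
    rw [show ((-1 / (3 * τ)) / 2 + 1 / 2) / (-1 / (3 * τ)) = 1 / 2 - 3 * τ / 2 by
      field_simp; ring]
    rw [theta_flip (3 * τ / 2) (3 * τ), theta'_flip (3 * τ / 2) (3 * τ), theta_zero (3 * τ)]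
    simp only [mul_zero, zero_mul, add_zero, zero_add, sub_zero]
    trans Complex.exp (5 * (π : ℂ) * I * τ / 12) * ((π : ℂ)⁻¹ *
      jacobiTheta₂' (3 * τ / 2 + 1 / 2) (3 * τ))
    · rw [← mul_assoc, ← Complex.exp_add,
        show (-(π : ℂ) * τ * I / 3 + (π : ℂ) * I * (3 * τ) / 4) = 5 * (π : ℂ) * I * τ / 12 by
          ring]
    · have hE : Complex.exp ((π : ℂ) * I / 2 - (π : ℂ) * I * τ / 3) *
          Complex.exp ((π : ℂ) * I * (-1 / (3 * τ)) / 4) *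
          Complex.exp (-(π : ℂ) * I * ((-1 / (3 * τ)) / 2 + 1 / 2) ^ 2 / (-1 / (3 * τ))) =
          Complex.exp (5 * (π : ℂ) * I * τ / 12) := by
        rw [← Complex.exp_add, ← Complex.exp_add]
        congr 1
        field_simp [hτ0]
        ring
      rw [hk_def, ← hE]
      generalize hsg : ((-I * (-1 / (3 * τ))) ^ (1 / 2 : ℂ)) = s
      rw [hsg] at hs
      generalize jacobiTheta₂' (3 * τ / 2 + 1 / 2) (3 * τ) = Y
      generalize Complex.exp ((π : ℂ) * I / 2 - (π : ℂ) * I * τ / 3) = E1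
      generalize Complex.exp ((π : ℂ) * I * (-1 / (3 * τ)) / 4) = E2
      generalize Complex.exp (-(π : ℂ) * I * ((-1 / (3 * τ)) / 2 + 1 / 2) ^ 2 / (-1 / (3 * τ))) = E3
      field_simp [hs, hτ0]
  have hden : 4 * I * jTheta ((π : ℂ) * τ) (3 * τ) + 6 * jTheta' ((π : ℂ) * τ) (3 * τ) =
      k * (6 * jTheta' ((π : ℂ) / 3) (-1 / (3 * τ))) := by
    rw [jTheta_eq ((π : ℂ) * τ) (3 * τ), jTheta'_eq ((π : ℂ) * τ) him3,
      jTheta'_eq ((π : ℂ) / 3) him2]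
    rw [show ((π : ℂ) * τ / (π : ℂ) + 3 * τ / 2 + 1 / 2) = 5 * τ / 2 + 1 / 2 by
      rw [mul_div_cancel_left₀ _ hπ]; ring]
    rw [show ((π : ℂ) / 3 / (π : ℂ) + (-1 / (3 * τ)) / 2 + 1 / 2) =
        (-1 / (3 * τ)) / 2 + 5 / 6 by
      rw [show ((π : ℂ) / 3 / (π : ℂ)) = 1 / 3 by rw [div_div, mul_comm, ← div_div, div_self hπ]]
      ring]
    rw [jacobiTheta₂_functional_equation ((-1 / (3 * τ)) / 2 + 5 / 6) (-1 / (3 * τ)),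
        jacobiTheta₂'_functional_equation ((-1 / (3 * τ)) / 2 + 5 / 6) (-1 / (3 * τ))]
    rw [show (-1 : ℂ) / (-1 / (3 * τ)) = 3 * τ by field_simp]
    rw [show ((-1 / (3 * τ)) / 2 + 5 / 6) / (-1 / (3 * τ)) = 1 / 2 - 5 * τ / 2 by
      field_simp; ring]
    rw [theta_flip (5 * τ / 2) (3 * τ), theta'_flip (5 * τ / 2) (3 * τ)]
    trans Complex.exp (7 * (π : ℂ) * I * τ / 4) *
      (10 * I * jacobiTheta₂ (5 * τ / 2 + 1 / 2) (3 * τ) +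
        6 * (π : ℂ)⁻¹ * jacobiTheta₂' (5 * τ / 2 + 1 / 2) (3 * τ))
    · rw [show ((π : ℂ) * I * (3 * τ) / 4 + I * ((π : ℂ) * τ)) = 7 * (π : ℂ) * I * τ / 4 by
        ring]
      ring
    · have hE : Complex.exp ((π : ℂ) * I / 2 - (π : ℂ) * I * τ / 3) *
          Complex.exp ((π : ℂ) * I * (-1 / (3 * τ)) / 4 + I * ((π : ℂ) / 3)) *
          Complex.exp (-(π : ℂ) * I * ((-1 / (3 * τ)) / 2 + 5 / 6) ^ 2 / (-1 / (3 * τ))) =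
          Complex.exp (7 * (π : ℂ) * I * τ / 4) := by
        rw [← Complex.exp_add, ← Complex.exp_add]
        congr 1
        field_simp [hτ0]
        ring
      rw [hk_def, ← hE]
      generalize hsg : ((-I * (-1 / (3 * τ))) ^ (1 / 2 : ℂ)) = s
      rw [hsg] at hs
      generalize jacobiTheta₂ (5 * τ / 2 + 1 / 2) (3 * τ) = X
      generalize jacobiTheta₂' (5 * τ / 2 + 1 / 2) (3 * τ) = X'
      generalize Complex.exp ((π : ℂ) * I / 2 - (π : ℂ) * I * τ / 3) = E1
      generalize Complex.exp ((π : ℂ) * I * (-1 / (3 * τ)) / 4 + I * ((π : ℂ) / 3)) = E2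
      generalize Complex.exp (-(π : ℂ) * I * ((-1 / (3 * τ)) / 2 + 5 / 6) ^ 2 / (-1 / (3 * τ))) = E3
      field_simp [hs, hτ0]
      ring
  rw [hnum, hden, mul_div_mul_left _ _ hk]

end ThetaAux
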